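/- For every t ∈ ℂ with t ≠ 0, t ≠ 1, t^m ≠ 1 and t^n ≠ 1, define B(t) := t^{-(m+1)(n+1)/2} · (1 - t^{mr})(1 - t^{ns})(t^m - t^n)^2 / ((1 - t^m)(1 - t^n)) and Δ(t) := t^{-(m-1)(n-1)/2} · (1 - t)(1 - t^{mn}) / ((1 - t^m)(1 - t^n)). Then t^{-mn} B(t^{-1}) - t^{mn} B(t) = t^{-(m+n)} · Δ(t) · (1 - t^{mr})(1 - t^{ns})(t^m - t^n)^2 / (1 - t). -/

import Mathlib

set_option maxHeartbeats 1000000 in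
/-- For `t ∈ ℂ` with `t ≠ 0`, `t ≠ 1`, `t^m ≠ 1`, `t^n ≠ 1`, with
`B(t) := t^(-(m+1)(n+1)/2) (1 - t^(mr))(1 - t^(ns))(t^m - t^n)^2 / ((1 - t^m)(1 - t^n))` and
`Δ(t) := t^(-(m-1)(n-1)/2) (1 - t)(1 - t^(mn)) / ((1 - t^m)(1 - t^n))`, we have
`t^(-mn) B(t⁻¹) - t^(mn) B(t) = t^(-(m+n)) Δ(t) (1 - t^(mr))(1 - t^(ns))(t^m - t^n)^2 / (1 - t)`. -/
theorem stmt_6 (m n r s : ℤ) (hm : 1 < m) (hn : 1 < n) (hmn : IsCoprime m n)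
    (hbezout : m * r + n * s = 1) (hr₁ : -n < r) (hr₂ : r < 0) (hs₁ : 0 < s) (hs₂ : s < m)
    (B Δ : ℂ → ℂ)
    (hB : ∀ t : ℂ, t ≠ 0 → t ≠ 1 → t ^ m ≠ 1 → t ^ n ≠ 1 →
      B t = t ^ (-((m + 1) * (n + 1) / 2)) *
        ((1 - t ^ (m * r)) * (1 - t ^ (n * s)) * (t ^ m - t ^ n) ^ 2) /
          ((1 - t ^ m) * (1 - t ^ n)))
    (hΔ : ∀ t : ℂ, t ≠ 0 → t ≠ 1 → t ^ m ≠ 1 → t ^ n ≠ 1 →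
      Δ t = t ^ (-((m - 1) * (n - 1) / 2)) * ((1 - t) * (1 - t ^ (m * n))) /
        ((1 - t ^ m) * (1 - t ^ n)))
    (t : ℂ) (ht0 : t ≠ 0) (ht1 : t ≠ 1) (htm : t ^ m ≠ 1) (htn : t ^ n ≠ 1) :
    t ^ (-(m * n)) * B t⁻¹ - t ^ (m * n) * B t =
      t ^ (-(m + n)) * Δ t *
        ((1 - t ^ (m * r)) * (1 - t ^ (n * s)) * (t ^ m - t ^ n) ^ 2) / (1 - t) := by
  -- parity
  have hpar : ¬ (2 ∣ m ∧ 2 ∣ n) := by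
    rintro ⟨h1, h2⟩
    have := hmn.isUnit_of_dvd' h1 h2
    rw [Int.isUnit_iff] at this
    omega
  have hpa : (2 : ℤ) ∣ (m + 1) * (n + 1) := by
    rcases Int.even_or_odd m with he | ho
    · rcases Int.even_or_odd n with he' | ho'
      · exact absurd ⟨he.two_dvd, he'.two_dvd⟩ hpar
      · obtain ⟨k, hk⟩ := ho'
        exact Dvd.dvd.mul_left (by omega) _
    · obtain ⟨k, hk⟩ := ho
      exact Dvd.dvd.mul_right (by omega) _
  have hpb : (2 : ℤ) ∣ (m - 1) * (n - 1) := by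
    rcases Int.even_or_odd m with he | ho
    · rcases Int.even_or_odd n with he' | ho'
      · exact absurd ⟨he.two_dvd, he'.two_dvd⟩ hpar
      · obtain ⟨k, hk⟩ := ho'
        exact Dvd.dvd.mul_left (by omega) _
    · obtain ⟨k, hk⟩ := ho
      exact Dvd.dvd.mul_right (by omega) _
  have h2a : 2 * ((m + 1) * (n + 1) / 2) = (m + 1) * (n + 1) := Int.mul_ediv_cancel' hpa
  have h2b : 2 * ((m - 1) * (n - 1) / 2) = (m - 1) * (n - 1) := Int.mul_ediv_cancel' hpb
  have hexp1 : (m + 1) * (n + 1) = m * n + m + n + 1 := by ring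
  have hexp2 : (m - 1) * (n - 1) = m * n - m - n + 1 := by ring
  -- hypotheses for t⁻¹
  have ht0' : t⁻¹ ≠ 0 := inv_ne_zero ht0
  have ht1' : t⁻¹ ≠ 1 := by rwa [ne_eq, inv_eq_one]
  have htm' : (t⁻¹) ^ m ≠ 1 := by rwa [inv_zpow, ne_eq, inv_eq_one]
  have htn' : (t⁻¹) ^ n ≠ 1 := by rwa [inv_zpow, ne_eq, inv_eq_one]
  rw [hB t ht0 ht1 htm htn, hB t⁻¹ ht0' ht1' htm' htn', hΔ t ht0 ht1 htm htn]
  simp only [inv_zpow, zpow_neg, inv_inv]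
  rw [zpow_add₀ ht0 m n]
  -- relations
  have hUV : t ^ (m * r) * t ^ (n * s) = t := by
    rw [← zpow_add₀ ht0, hbezout, zpow_one]
  have ea : (m + 1) * (n + 1) / 2 + (m + 1) * (n + 1) / 2 = m * n + (m + (n + 1)) := by
    linarith
  have eb : (m - 1) * (n - 1) / 2 + (m + n) = (m + 1) * (n + 1) / 2 := by linarith
  have hZZ : t ^ ((m + 1) * (n + 1) / 2) * t ^ ((m + 1) * (n + 1) / 2)
      = t ^ (m * n) * t ^ m * t ^ n * t := by
    rw [← zpow_add₀ ht0, ea, zpow_add₀ ht0, zpow_add₀ ht0, zpow_add₀ ht0, zpow_one]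
    ring
  have hZb : t ^ ((m - 1) * (n - 1) / 2) * (t ^ m * t ^ n)
      = t ^ ((m + 1) * (n + 1) / 2) := by
    rw [← eb, zpow_add₀ ht0, zpow_add₀ ht0]
  have hX0 : t ^ m ≠ 0 := zpow_ne_zero _ ht0
  have hY0 : t ^ n ≠ 0 := zpow_ne_zero _ ht0
  have hU0 : t ^ (m * r) ≠ 0 := zpow_ne_zero _ ht0
  have hV0 : t ^ (n * s) ≠ 0 := zpow_ne_zero _ ht0
  have hW0 : t ^ (m * n) ≠ 0 := zpow_ne_zero _ ht0
  have hA0 : t ^ ((m + 1) * (n + 1) / 2) ≠ 0 := zpow_ne_zero _ ht0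
  have hBb0 : t ^ ((m - 1) * (n - 1) / 2) ≠ 0 := zpow_ne_zero _ ht0
  have h1X : (1 : ℂ) - t ^ m ≠ 0 := sub_ne_zero.mpr (Ne.symm htm)
  have h1Y : (1 : ℂ) - t ^ n ≠ 0 := sub_ne_zero.mpr (Ne.symm htn)
  have h1t : (1 : ℂ) - t ≠ 0 := sub_ne_zero.mpr (Ne.symm ht1)
  set X := t ^ m with hXd
  set Y := t ^ n with hYd
  set U := t ^ (m * r) with hUd
  set V := t ^ (n * s) with hVd
  set W := t ^ (m * n) with hWd
  set A := t ^ ((m + 1) * (n + 1) / 2) with hAd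
  set Bb := t ^ ((m - 1) * (n - 1) / 2) with hBd
  clear_value X Y U V W A Bb
  rw [← hZb] at hZZ ⊢
  rw [← hUV] at hZZ ⊢
  have hZZ2 : Bb * Bb * (X * Y) = W * (U * V) := by
    apply mul_left_cancel₀ (mul_ne_zero hX0 hY0)
    linear_combination hZZ
  have h1UV : (1 : ℂ) - U * V ≠ 0 := by rw [hUV]; exact h1t
  have haX : X - 1 ≠ 0 := fun h => h1X (by linear_combination -h)
  have haY : Y - 1 ≠ 0 := fun h => h1Y (by linear_combination -h)
  have key1 : W⁻¹ * (Bb * (X * Y) * ((1 - U⁻¹) * (1 - V⁻¹) * (X⁻¹ - Y⁻¹) ^ 2) /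
        ((1 - X⁻¹) * (1 - Y⁻¹)))
      = (Bb * (X * Y))⁻¹ * ((1 - U) * (1 - V) * (X - Y) ^ 2) / ((1 - X) * (1 - Y)) := by
    have e1 : (1 : ℂ) - X⁻¹ = -(1 - X) * X⁻¹ := by field_simp; ring
    have e2 : (1 : ℂ) - Y⁻¹ = -(1 - Y) * Y⁻¹ := by field_simp; ring
    have e3 : (1 : ℂ) - U⁻¹ = -(1 - U) * U⁻¹ := by field_simp; ring
    have e4 : (1 : ℂ) - V⁻¹ = -(1 - V) * V⁻¹ := by field_simp; ring
    have e5 : X⁻¹ - Y⁻¹ = (Y - X) * (X⁻¹ * Y⁻¹) := by field_simp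
    rw [e1, e2, e3, e4, e5]
    field_simp
    linear_combination ((1 - U) * (1 - V) * (X - Y) ^ 2) * hZZ2
  have key2 : (X * Y)⁻¹ * (Bb⁻¹ * ((1 - U * V) * (1 - W)) / ((1 - X) * (1 - Y))) *
        ((1 - U) * (1 - V) * (X - Y) ^ 2) / (1 - U * V)
      = (1 - W) * ((Bb * (X * Y))⁻¹ * ((1 - U) * (1 - V) * (X - Y) ^ 2) / ((1 - X) * (1 - Y))) := by
    rw [div_eq_iff h1UV]
    field_simp
  rw [key1, key2]
  ring
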